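/- If f : G → H is a group homomorphism, then the map f̂ : L(G) → L(H) defined by f̂(∑ aᵢ ĝᵢ) = ∑ aᵢ (f(gᵢ) − f(gᵢ)⁻¹) is a well-defined Lie algebra homomorphism between the Plesken Lie algebras, and it equals the restriction of f̄ : FG → FH to L(G). -/

import Mathlib

/-- The Plesken Lie algebra `L(G)` of a group `G` over `F`, as the `F`-linear span of the
elements `ĝ = g - g⁻¹` inside the group algebra `FG`. -/
noncomputable def pleskenSpan (F G : Type*) [Field F] [Group G] :
    Submodule F (MonoidAlgebra F G) :=
  Submodule.span F
    {x | ∃ g : G, x = MonoidAlgebra.of F G g - MonoidAlgebra.of F G g⁻¹}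

/-- The linear extension `f̄ : FG → FH` of a group homomorphism `f : G → H`. -/
noncomputable def groupAlgebraMap (F : Type*) {G H : Type*} [Field F] [Group G] [Group H]
    (f : G →* H) : MonoidAlgebra F G → MonoidAlgebra F H :=
  MonoidAlgebra.mapDomain (⇑f)

/-- If `f : G → H` is a group homomorphism, then `f̂ : L(G) → L(H)`, the
restriction of the linear extension `f̄ : FG → FH` to the Plesken Lie algebra, is
well-defined (it maps `L(G)` into `L(H)`), sends each generator `ĝ = g - g⁻¹` to
`f(g) - f(g)⁻¹`, and is a Lie algebra homomorphism (linear and bracket-preserving). -/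
theorem plesken_map_is_lieHom
    (F G H : Type*) [Field F] [Group G] [Group H] [Finite G] [Finite H]
    (f : G →* H) :
    (∀ x ∈ pleskenSpan F G, groupAlgebraMap F f x ∈ pleskenSpan F H) ∧
    (∀ g : G,
        groupAlgebraMap F f (MonoidAlgebra.of F G g - MonoidAlgebra.of F G g⁻¹)
          = MonoidAlgebra.of F H (f g) - MonoidAlgebra.of F H (f g)⁻¹) ∧
    (∀ x ∈ pleskenSpan F G, ∀ y ∈ pleskenSpan F G,
        groupAlgebraMap F f ⁅x, y⁆ = ⁅groupAlgebraMap F f x, groupAlgebraMap F f y⁆) ∧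
    (∀ x y : MonoidAlgebra F G,
        groupAlgebraMap F f (x + y) = groupAlgebraMap F f x + groupAlgebraMap F f y) ∧
    (∀ (c : F) (x : MonoidAlgebra F G),
        groupAlgebraMap F f (c • x) = c • groupAlgebraMap F f x) := by
  have hlin : groupAlgebraMap F f = ⇑(MonoidAlgebra.mapDomainLinearMap F F (⇑f)) := rfl
  have hmul : ∀ x y : MonoidAlgebra F G,
      groupAlgebraMap F f (x * y) = groupAlgebraMap F f x * groupAlgebraMap F f y := by
    intro x y
    exact MonoidAlgebra.mapDomain_mul f x y
  have hgen : ∀ g : G,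
      groupAlgebraMap F f (MonoidAlgebra.of F G g - MonoidAlgebra.of F G g⁻¹)
        = MonoidAlgebra.of F H (f g) - MonoidAlgebra.of F H (f g)⁻¹ := by
    intro g
    rw [hlin, map_sub]
    simp [Finsupp.lmapDomain_apply, MonoidAlgebra.of_apply, MonoidAlgebra.mapDomainLinearMap_single,
      Finsupp.mapDomain_single]
  have hmem : ∀ x ∈ pleskenSpan F G, groupAlgebraMap F f x ∈ pleskenSpan F H := by
    intro x hx
    induction hx using Submodule.span_induction with
    | mem x hx =>
      obtain ⟨g, rfl⟩ := hx
      rw [hgen]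
      exact Submodule.subset_span ⟨f g, rfl⟩
    | zero => rw [hlin, map_zero]; exact zero_mem _
    | add a b _ _ ha hb => rw [hlin, map_add]; exact add_mem ha hb
    | smul c a _ ha => rw [hlin, map_smul]; exact Submodule.smul_mem _ _ ha
  refine ⟨hmem, hgen, ?_, ?_, ?_⟩
  · intro x _ y _
    rw [Ring.lie_def, Ring.lie_def, hlin, map_sub, ← hlin, hmul, hmul]
  · intro x y; rw [hlin, map_add]
  · intro c x; rw [hlin, map_smul]
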